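/- Let S be the topological space on the four-element set {p,q,r,s} (four pairwise distinct points) whose open sets are exactly all subsets of {p,q,r} together with S itself. Then the regular closed subsets of S are exactly ∅, {p,s}, {q,s}, {r,s}, {p,q,s}, {p,r,s}, {q,r,s}, and S, and the nonempty regular closed subsets of S whose interior is a nonempty preconnected subspace are exactly {p,s}, {q,s}, {r,s}, and S. -/
import Mathlib


/-- The four-element set `S = {p, q, r, s}` (four pairwise distinct points). -/
inductive Pt4 : Type
  | p | q | r | s
deriving DecidableEq

open Pt4

set_option maxHeartbeats 1000000 in
/-- Let S carry the topology whose open sets are exactly all subsets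
of {p,q,r} together with S.  Then the regular closed subsets of S are exactly
∅, {p,s}, {q,s}, {r,s}, {p,q,s}, {p,r,s}, {q,r,s}, and S, and the nonempty regular
closed subsets of S whose interior is a nonempty preconnected subspace are exactly
{p,s}, {q,s}, {r,s}, and S. -/
theorem stmt17 [TopologicalSpace Pt4]
    (hopen : {U : Set Pt4 | IsOpen U} =
      {U : Set Pt4 | U ⊆ ({p, q, r} : Set Pt4)} ∪ {Set.univ}) :
    {A : Set Pt4 | A = closure (interior A)} =
      ({∅, {p, s}, {q, s}, {r, s}, {p, q, s}, {p, r, s}, {q, r, s},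
        Set.univ} : Set (Set Pt4)) ∧
    {A : Set Pt4 | A.Nonempty ∧ A = closure (interior A) ∧
        (interior A).Nonempty ∧ IsPreconnected (interior A)} =
      ({{p, s}, {q, s}, {r, s}, Set.univ} : Set (Set Pt4)) := by
  have hiff : ∀ U : Set Pt4, IsOpen U ↔ (U ⊆ ({p,q,r} : Set Pt4) ∨ U = Set.univ) := by
    intro U
    have h := Set.ext_iff.mp hopen U
    simp only [Set.mem_setOf_eq, Set.mem_union, Set.mem_singleton_iff] at h
    exact h
  have hmem : ∀ x : Pt4, x ∈ ({p,q,r} : Set Pt4) ↔ x ≠ s := by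
    intro x; cases x <;> simp
  have hsne : ∀ U : Set Pt4, IsOpen U → s ∈ U → U = Set.univ := by
    intro U hU hs
    rcases (hiff U).mp hU with h | h
    · exact absurd ((hmem s).mp (h hs)) (by simp)
    · exact h
  have hint : ∀ A : Set Pt4, A ≠ Set.univ → interior A = A \ {s} := by
    intro A hA
    apply subset_antisymm
    · intro x hx
      rcases (hiff _).mp (isOpen_interior (s := A)) with h | h
      · exact ⟨interior_subset hx, by simpa using (hmem x).mp (h hx)⟩
      · exact absurd (Set.eq_univ_of_univ_subset (h ▸ interior_subset)) hA
    · exact interior_maximal Set.diff_subset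
        ((hiff _).mpr (Or.inl (fun x hx => (hmem x).mpr (by simpa using hx.2))))
  have hclo : ∀ A : Set Pt4, A.Nonempty → closure A = A ∪ {s} := by
    intro A hA
    apply subset_antisymm
    · apply closure_minimal Set.subset_union_left
      rw [← isOpen_compl_iff]
      apply (hiff _).mpr
      left
      intro x hx
      simp only [Set.mem_compl_iff, Set.mem_union, Set.mem_singleton_iff] at hx
      push_neg at hx
      exact (hmem x).mpr hx.2
    · rintro x (hx | hx)
      · exact subset_closure hx
      · simp only [Set.mem_singleton_iff] at hx
        subst hx
        rw [mem_closure_iff]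
        intro U hU hs
        have hUe := hsne U hU hs
        subst hUe
        simpa using hA
  have hext : ∀ A B : Set Pt4, (p ∈ A ↔ p ∈ B) → (q ∈ A ↔ q ∈ B) → (r ∈ A ↔ r ∈ B) →
      (s ∈ A ↔ s ∈ B) → A = B := by
    intro A B h1 h2 h3 h4; ext x; cases x <;> assumption
  have hrc : ∀ A : Set Pt4, A = closure (interior A) ↔
      (A = ∅ ∨ (s ∈ A ∧ ∃ x ∈ A, x ≠ s)) := by
    intro A
    constructor
    · intro h
      by_cases hA : A = Set.univ
      · exact Or.inr ⟨hA ▸ Set.mem_univ s, p, hA ▸ Set.mem_univ p, by simp⟩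
      · rw [hint A hA] at h
        by_cases hne : (A \ {s}).Nonempty
        · rw [hclo _ hne] at h
          obtain ⟨x, hx⟩ := hne
          exact Or.inr ⟨h ▸ Or.inr rfl, x, hx.1, by simpa using hx.2⟩
        · rw [Set.not_nonempty_iff_eq_empty] at hne
          rw [hne, closure_empty] at h
          exact Or.inl h
    · rintro (rfl | ⟨hs, x, hx, hxs⟩)
      · simp
      · by_cases hA : A = Set.univ
        · subst hA; simp
        · rw [hint A hA, hclo (A \ {s}) ⟨x, ⟨hx, by simpa using hxs⟩⟩]
          ext y
          by_cases hy : y = s <;> simp [hy, hs]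
  have hpre_s : ∀ A : Set Pt4, s ∈ A → IsPreconnected A := by
    intro A hsA U V hU hV hcov hAU hAV
    rcases hcov hsA with h | h
    · have hUe := hsne U hU h
      subst hUe
      obtain ⟨y, hy⟩ := hAV
      exact ⟨y, hy.1, trivial, hy.2⟩
    · have hVe := hsne V hV h
      subst hVe
      obtain ⟨y, hy⟩ := hAU
      exact ⟨y, hy.1, hy.2, trivial⟩
  have hsmall : ∀ B : Set Pt4, B ⊆ ({p,q,r} : Set Pt4) → IsPreconnected B →
      ∀ x ∈ B, ∀ y ∈ B, y = x := by
    intro B hB hpre x hx y hy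
    by_contra hxy
    have hU : IsOpen ({x} : Set Pt4) := (hiff _).mpr (Or.inl (by
      intro z hz
      simp only [Set.mem_singleton_iff] at hz
      subst hz
      exact hB hx))
    have hV : IsOpen (({p,q,r} : Set Pt4) \ {x}) := (hiff _).mpr (Or.inl Set.diff_subset)
    obtain ⟨z, hz⟩ := hpre {x} (({p,q,r} : Set Pt4) \ {x}) hU hV
      (fun w hw => by
        by_cases hwx : w = x
        · exact Or.inl (by simp [hwx])
        · exact Or.inr ⟨hB hw, by simp [hwx]⟩)
      ⟨x, hx, rfl⟩
      ⟨y, hy, hB hy, by simpa using hxy⟩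
    exact hz.2.2.2 hz.2.1
  constructor
  · ext A
    simp only [Set.mem_setOf_eq, Set.mem_insert_iff, Set.mem_singleton_iff]
    rw [hrc A]
    constructor
    · rintro (rfl | ⟨hs, x, hx, hxs⟩)
      · tauto
      · by_cases hp : p ∈ A <;> by_cases hq : q ∈ A <;> by_cases hr : r ∈ A
        · have : A = Set.univ := hext A _ (by simp [hp]) (by simp [hq]) (by simp [hr]) (by simp [hs])
          simp [this]
        · have : A = {p,q,s} := hext A _ (by simp [hp]) (by simp [hq]) (by simp [hr]) (by simp [hs])
          simp [this]
        · have : A = {p,r,s} := hext A _ (by simp [hp]) (by simp [hq]) (by simp [hr]) (by simp [hs])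
          simp [this]
        · have : A = {p,s} := hext A _ (by simp [hp]) (by simp [hq]) (by simp [hr]) (by simp [hs])
          simp [this]
        · have : A = {q,r,s} := hext A _ (by simp [hp]) (by simp [hq]) (by simp [hr]) (by simp [hs])
          simp [this]
        · have : A = {q,s} := hext A _ (by simp [hp]) (by simp [hq]) (by simp [hr]) (by simp [hs])
          simp [this]
        · have : A = {r,s} := hext A _ (by simp [hp]) (by simp [hq]) (by simp [hr]) (by simp [hs])
          simp [this]
        · exfalso
          cases x
          · exact hp hx
          · exact hq hx
          · exact hr hx
          · exact hxs rfl
    · rintro (rfl | rfl | rfl | rfl | rfl | rfl | rfl | rfl)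
      · exact Or.inl rfl
      · exact Or.inr ⟨by simp, p, by simp, by simp⟩
      · exact Or.inr ⟨by simp, q, by simp, by simp⟩
      · exact Or.inr ⟨by simp, r, by simp, by simp⟩
      · exact Or.inr ⟨by simp, p, by simp, by simp⟩
      · exact Or.inr ⟨by simp, p, by simp, by simp⟩
      · exact Or.inr ⟨by simp, q, by simp, by simp⟩
      · exact Or.inr ⟨trivial, p, trivial, by simp⟩
  · ext A
    simp only [Set.mem_setOf_eq, Set.mem_insert_iff, Set.mem_singleton_iff]
    constructor
    · rintro ⟨hAne, hreg, hint_ne, hpre⟩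
      by_cases hA : A = Set.univ
      · tauto
      · rw [hint A hA] at hint_ne hpre
        have hsub : A \ {s} ⊆ ({p,q,r} : Set Pt4) :=
          fun x hx => (hmem x).mpr (by simpa using hx.2)
        obtain ⟨x, hx⟩ := hint_ne
        have hxall : ∀ y ∈ A \ {s}, y = x := fun y hy => hsmall _ hsub hpre x hx y hy
        have hsA : s ∈ A := by
          rcases (hrc A).mp hreg with rfl | h
          · simp at hx
          · exact h.1
        have hxs : x ≠ s := by simpa using hx.2
        have hA_eq : A = {x, s} := by
          ext y
          constructor
          · intro hy
            by_cases hys : y = s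
            · simp [hys]
            · simp [hxall y ⟨hy, by simpa using hys⟩]
          · rintro (rfl | rfl)
            · exact hx.1
            · exact hsA
        cases x with
        | p => tauto
        | q => tauto
        | r => tauto
        | s => exact absurd rfl hxs
    · have hne2 : ∀ x : Pt4, x ≠ s → ({x, s} : Set Pt4) ≠ Set.univ := by
        intro x hxs h
        have h1 : ∀ y : Pt4, y ∈ ({x, s} : Set Pt4) := fun y => h.symm ▸ Set.mem_univ y
        cases x with
        | p =>
          have h2 := h1 q
          simp only [Set.mem_insert_iff, Set.mem_singleton_iff] at h2
          rcases h2 with h2 | h2 <;> exact Pt4.noConfusion h2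
        | q =>
          have h2 := h1 p
          simp only [Set.mem_insert_iff, Set.mem_singleton_iff] at h2
          rcases h2 with h2 | h2 <;> exact Pt4.noConfusion h2
        | r =>
          have h2 := h1 p
          simp only [Set.mem_insert_iff, Set.mem_singleton_iff] at h2
          rcases h2 with h2 | h2 <;> exact Pt4.noConfusion h2
        | s => exact hxs rfl
      have key : ∀ x : Pt4, x ≠ s →
          (({x, s} : Set Pt4).Nonempty ∧ ({x, s} : Set Pt4) = closure (interior {x, s}) ∧
            (interior ({x, s} : Set Pt4)).Nonempty ∧ IsPreconnected (interior ({x, s} : Set Pt4))) := by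
        intro x hxs
        have hne := hne2 x hxs
        have hdiff : ({x, s} : Set Pt4) \ {s} = {x} := by
          ext y
          simp only [Set.mem_diff, Set.mem_insert_iff, Set.mem_singleton_iff]
          constructor
          · rintro ⟨rfl | rfl, hy⟩
            · rfl
            · exact absurd rfl hy
          · rintro rfl; exact ⟨Or.inl rfl, hxs⟩
        refine ⟨⟨s, by simp⟩, ?_, ?_, ?_⟩
        · exact (hrc _).mpr (Or.inr ⟨by simp, x, by simp, hxs⟩)
        · rw [hint _ hne, hdiff]; exact ⟨x, rfl⟩
        · rw [hint _ hne, hdiff]; exact isPreconnected_singleton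
      rintro (rfl | rfl | rfl | rfl)
      · exact key p (by simp)
      · exact key q (by simp)
      · exact key r (by simp)
      · refine ⟨⟨s, trivial⟩, by simp, by rw [interior_univ]; exact ⟨s, trivial⟩, ?_⟩
        rw [interior_univ]
        exact hpre_s _ trivial
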